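/- The pair β_n = q^{n²+n}/(q²;q)_{2n}, with α_{3m-1} = q^{3m²-2m}, α_{3m} = q^{3m²+2m}, α_{3m+1} = -q^{3m²+4m+1} - q^{3m²+2m}, is a Bailey pair relative to a = q. -/

import Mathlib

open Finset

noncomputable def qPoch (a q : ℂ) (n : ℕ) : ℂ := ∏ i ∈ Finset.range n, (1 - a * q ^ i)

noncomputable def qInf (q : ℂ) : ℂ := ∏' i : ℕ, (1 - q ^ (i + 1))

def zsgn (m : ℤ) : ℤ := if 0 ≤ m then 1 else -1

noncomputable def alphaS7 (q : ℂ) (n : ℕ) : ℂ :=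
  if n % 3 = 0 then q ^ (3 * ((n : ℤ) / 3) ^ 2 + 2 * ((n : ℤ) / 3) : ℤ)
  else if n % 3 = 1 then -q ^ (3 * ((n : ℤ) / 3) ^ 2 + 4 * ((n : ℤ) / 3) + 1 : ℤ) - q ^ (3 * ((n : ℤ) / 3) ^ 2 + 2 * ((n : ℤ) / 3) : ℤ)
  else q ^ (3 * (((n : ℤ) + 1) / 3) ^ 2 - 2 * (((n : ℤ) + 1) / 3) : ℤ)

/- ### auxiliary lemmas -/

lemma qPoch_zero (a q : ℂ) : qPoch a q 0 = 1 := by simp [qPoch]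

lemma qPoch_succ (a q : ℂ) (n : ℕ) : qPoch a q (n+1) = qPoch a q n * (1 - a * q ^ n) :=
  Finset.prod_range_succ _ _

lemma one_sub_pow_ne (q : ℂ) (hq : ‖q‖ < 1) {j : ℕ} (hj : 1 ≤ j) : (1:ℂ) - q ^ j ≠ 0 := by
  intro h
  have h1 : q ^ j = 1 := ((sub_eq_zero.mp h).symm)
  have h2 : ‖q ^ j‖ < 1 := by
    rw [norm_pow]
    calc ‖q‖ ^ j ≤ ‖q‖ ^ 1 := pow_le_pow_of_le_one (norm_nonneg q) hq.le hj
    _ < 1 := by rwa [pow_one]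
  rw [h1] at h2; norm_num at h2

lemma P1_ne (q : ℂ) (hq : ‖q‖ < 1) (k : ℕ) : qPoch q q k ≠ 0 := by
  unfold qPoch
  rw [Finset.prod_ne_zero_iff]
  intro i _
  have e : (1:ℂ) - q * q ^ i = 1 - q ^ (i+1) := by ring
  rw [e]; exact one_sub_pow_ne q hq (by omega)

lemma P2_ne (q : ℂ) (hq : ‖q‖ < 1) (k : ℕ) : qPoch (q^2) q k ≠ 0 := by
  unfold qPoch
  rw [Finset.prod_ne_zero_iff]
  intro i _
  have e : (1:ℂ) - q^2 * q ^ i = 1 - q ^ (i+2) := by ring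
  rw [e]; exact one_sub_pow_ne q hq (by omega)

lemma alpha_0 (q : ℂ) (m : ℕ) : alphaS7 q (3*m) = q ^ (3*m^2+2*m) := by
  unfold alphaS7
  rw [if_pos (by omega : 3*m % 3 = 0)]
  have h2 : ((3*m : ℕ) : ℤ) / 3 = (m : ℤ) := by push_cast; omega
  rw [h2, show 3*(m:ℤ)^2+2*(m:ℤ) = ((3*m^2+2*m : ℕ) : ℤ) by push_cast; ring, zpow_natCast]

lemma alpha_1 (q : ℂ) (m : ℕ) :
    alphaS7 q (3*m+1) = -q ^ (3*m^2+4*m+1) - q ^ (3*m^2+2*m) := by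
  unfold alphaS7
  rw [if_neg (by omega : ¬ (3*m+1) % 3 = 0), if_pos (by omega : (3*m+1) % 3 = 1)]
  have h2 : ((3*m+1 : ℕ) : ℤ) / 3 = (m : ℤ) := by push_cast; omega
  rw [h2, show 3*(m:ℤ)^2+4*(m:ℤ)+1 = ((3*m^2+4*m+1 : ℕ) : ℤ) by push_cast; ring,
      show 3*(m:ℤ)^2+2*(m:ℤ) = ((3*m^2+2*m : ℕ) : ℤ) by push_cast; ring,
      zpow_natCast, zpow_natCast]

lemma alpha_2 (q : ℂ) (m : ℕ) : alphaS7 q (3*m+2) = q ^ (3*m^2+4*m+1) := by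
  unfold alphaS7
  rw [if_neg (by omega : ¬ (3*m+2) % 3 = 0), if_neg (by omega : ¬ (3*m+2) % 3 = 1)]
  have h2 : (((3*m+2 : ℕ) : ℤ) + 1) / 3 = (m : ℤ) + 1 := by push_cast; omega
  rw [h2, show 3*((m:ℤ)+1)^2-2*((m:ℤ)+1) = ((3*m^2+4*m+1 : ℕ) : ℤ) by push_cast; ring,
      zpow_natCast]


lemma qPoch_one (a q : ℂ) : qPoch a q 1 = 1 - a := by simp [qPoch]

/- ### the telescoping certificate -/

noncomputable def nn0 (q : ℂ) (s m : ℕ) : ℂ :=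
  q^(2*s+4*m+3*m^2) + q^(s+2*m+3*m^2) - q^(s+4*m+3*m^2) - q^(1+3*s+10*m+3*m^2)
  - q^(2*s+8*m+3*m^2) - q^(1+2*s+8*m+3*m^2) + q^(1+2*s+10*m+3*m^2) + q^(1+3*s+14*m+3*m^2)

noncomputable def nn1 (q : ℂ) (s m : ℕ) : ℂ :=
  q^(2*s+4*m+3*m^2) + q^(s+2*m+3*m^2) - q^(3*s+8*m+3*m^2) - q^(s+4*m+3*m^2)
  - q^(1+3*s+10*m+3*m^2) - q^(2*m+3*m^2) + q^(2*s+8*m+3*m^2) + q^(1+2*s+10*m+3*m^2)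

noncomputable def nn2 (q : ℂ) (d m : ℕ) : ℂ :=
  - q^(7+4*d+8*m+3*m^2) + q^(4+2*d+4*m+3*m^2) - q^(8+4*d+10*m+3*m^2) + q^(5+3*d+8*m+3*m^2)
  + q^(6+3*d+8*m+3*m^2) + q^(7+3*d+8*m+3*m^2) - q^(2+d+4*m+3*m^2) + q^(6+3*d+10*m+3*m^2)
  - q^(3+d+4*m+3*m^2) + q^(7+3*d+10*m+3*m^2) - q^(4+2*d+8*m+3*m^2) - q^(5+2*d+8*m+3*m^2)
  - q^(6+2*d+8*m+3*m^2) + q^(1+4*m+3*m^2) - q^(5+2*d+10*m+3*m^2) + q^(4+d+8*m+3*m^2)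

noncomputable def KK (q : ℂ) (N r : ℕ) : ℂ :=
  if r ≤ N then
    (if r % 3 = 0 then nn0 q (N - r) (r/3)
     else if r % 3 = 1 then nn1 q (N - r + 1) (r/3)
     else nn2 q (N - r) (r/3)) /
    (qPoch q q (N - 3*(r/3)) * qPoch (q^2) q (N + 3*(r/3)) *
      (if r % 3 = 2 then (1 - q^(N + 3*(r/3) + 2)) else 1))
  else 0

lemma KK0 (q : ℂ) (N m : ℕ) (h : 3*m ≤ N) :
    KK q N (3*m) = nn0 q (N - 3*m) m / (qPoch q q (N - 3*m) * qPoch (q^2) q (N + 3*m)) := by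
  unfold KK
  rw [if_pos h]
  have h1 : 3*m % 3 = 0 := by omega
  have h2 : 3*m / 3 = m := by omega
  rw [h1, h2]
  norm_num

lemma KK1 (q : ℂ) (N m : ℕ) (h : 3*m+1 ≤ N) :
    KK q N (3*m+1) = nn1 q (N - 3*m) m / (qPoch q q (N - 3*m) * qPoch (q^2) q (N + 3*m)) := by
  unfold KK
  rw [if_pos h]
  have h1 : (3*m+1) % 3 = 1 := by omega
  have h2 : (3*m+1) / 3 = m := by omega
  have h3 : N - (3*m+1) + 1 = N - 3*m := by omega
  rw [h1, h2, h3]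
  norm_num

lemma KK2 (q : ℂ) (N m : ℕ) (h : 3*m+2 ≤ N) :
    KK q N (3*m+2) = nn2 q (N - 3*m - 2) m /
      (qPoch q q (N - 3*m) * qPoch (q^2) q (N + 3*m) * (1 - q^(N + 3*m + 2))) := by
  unfold KK
  rw [if_pos h]
  have h1 : (3*m+2) % 3 = 2 := by omega
  have h2 : (3*m+2) / 3 = m := by omega
  have h3 : N - (3*m+2) = N - 3*m - 2 := by omega
  rw [h1, h2, h3]
  norm_num

lemma KKtop (q : ℂ) (N r : ℕ) (h : N < r) : KK q N r = 0 := by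
  unfold KK
  rw [if_neg (by omega)]


set_option maxHeartbeats 2000000 in
lemma step (q : ℂ) (hq : ‖q‖ < 1) (N r : ℕ) (hN : 1 ≤ N) (hr : r ≤ N) :
    (1 - q^(2*N)) * (1 - q^(2*N+1)) * (alphaS7 q r / (qPoch q q (N-r) * qPoch (q^2) q (N+r)))
      - q^(2*N) * (if r < N then alphaS7 q r / (qPoch q q (N-1-r) * qPoch (q^2) q (N-1+r)) else 0)
    = KK q N r - KK q N (r+1) := by
  have hne : ∀ j:ℕ, 1 ≤ j → (1:ℂ) - q^j ≠ 0 := fun j hj => one_sub_pow_ne q hq hj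
  have hne1 : ∀ s:ℕ, (1:ℂ) - q * q^s ≠ 0 := by
    intro s; have := hne (s+1) (by omega); rwa [pow_succ, mul_comm (q^s) q] at this
  have hne2 : ∀ t:ℕ, (1:ℂ) - q^2 * q^t ≠ 0 := by
    intro t; have := hne (t+2) (by omega); rwa [pow_add, mul_comm (q^t) (q^2)] at this
  obtain ⟨m, hm⟩ : ∃ m, r = 3*m ∨ r = 3*m+1 ∨ r = 3*m+2 := ⟨r/3, by omega⟩
  rcases hm with rfl | rfl | rfl
  · -- j = 0
    rcases eq_or_lt_of_le hr with heq | hlt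
    · -- 3*m = N
      subst heq
      rw [alpha_0, KK0 q _ m (by omega), KKtop q _ (3*m+1) (by omega), if_neg (by omega)]
      rw [show 3*m - 3*m = 0 by omega, show 3*m + 3*m = 6*m by omega,
          qPoch_zero]
      have hB := P2_ne q hq (6*m)
      simp only [nn0]
      field_simp
      ring
    · -- 3*m < N
      obtain ⟨s, rfl⟩ : ∃ s, N = 3*m+1+s := ⟨N - 3*m - 1, by omega⟩
      rw [alpha_0, KK0 q _ m (by omega), KK1 q _ m (by omega), if_pos (by omega)]
      rw [show 3*m+1+s - 3*m = s+1 by omega,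
          show 3*m+1+s - 1 - 3*m = s by omega,
          show 3*m+1+s + 3*m = (6*m+s)+1 by omega,
          show 3*m+1+s - 1 + 3*m = 6*m+s by omega,
          qPoch_succ q q s, qPoch_succ (q^2) q (6*m+s)]
      have hA := P1_ne q hq s
      have hB := P2_ne q hq (6*m+s)
      have h1 := hne1 s
      have h2 := hne2 (6*m+s)
      simp only [nn0, nn1]
      field_simp
      ring
  · -- j = 1
    rcases eq_or_lt_of_le hr with heq | hlt
    · -- 3*m+1 = N
      subst heq
      rw [alpha_1, KK1 q _ m (by omega), KKtop q _ (3*m+1+1) (by omega), if_neg (by omega)]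
      rw [show 3*m+1 - (3*m+1) = 0 by omega, show 3*m+1 - 3*m = 1 by omega,
          show 3*m+1 + (3*m+1) = (6*m+1)+1 by omega, show 3*m+1 + 3*m = 6*m+1 by omega,
          qPoch_zero, qPoch_one, qPoch_succ (q^2) q (6*m+1)]
      have hB := P2_ne q hq (6*m+1)
      have h1 : (1:ℂ) - q ≠ 0 := by have := hne 1 (by omega); rwa [pow_one] at this
      have h2 := hne2 (6*m+1)
      simp only [nn1]
      field_simp
      ring
    · -- 3*m+1 < N
      obtain ⟨s, rfl⟩ : ∃ s, N = 3*m+2+s := ⟨N - 3*m - 2, by omega⟩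
      rw [alpha_1, KK1 q _ m (by omega), KK2 q _ m (by omega), if_pos (by omega)]
      rw [show 3*m+2+s - (3*m+1) = s+1 by omega,
          show 3*m+2+s - 3*m - 2 = s by omega,
          show 3*m+2+s + 3*m + 2 = 6*m+s+4 by omega,
          show 3*m+2+s - 3*m = (s+1)+1 by omega,
          show 3*m+2+s - 1 - (3*m+1) = s by omega,
          show 3*m+2+s + (3*m+1) = (6*m+s+2)+1 by omega,
          show 3*m+2+s + 3*m = 6*m+s+2 by omega,
          show 3*m+2+s - 1 + (3*m+1) = 6*m+s+2 by omega,
          qPoch_succ q q (s+1), qPoch_succ q q s, qPoch_succ (q^2) q (6*m+s+2),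
          show (1:ℂ) - q^(6*m+s+4) = 1 - q^2*q^(6*m+s+2) by ring]
      have hA := P1_ne q hq s
      have hB := P2_ne q hq (6*m+s+2)
      have h1 := hne1 s
      have h1' := hne1 (s+1)
      have h2 := hne2 (6*m+s+2)
      rw [← mul_div_assoc, ← mul_div_assoc]
      rw [div_sub_div _ _ (by apply_rules [mul_ne_zero, one_ne_zero]) (by apply_rules [mul_ne_zero, one_ne_zero]),
          div_sub_div _ _ (by apply_rules [mul_ne_zero, one_ne_zero]) (by apply_rules [mul_ne_zero, one_ne_zero]),
          div_eq_div_iff (by apply_rules [mul_ne_zero, one_ne_zero]) (by apply_rules [mul_ne_zero, one_ne_zero])]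
      simp only [nn1, nn2]
      ring
  · -- j = 2
    rcases eq_or_lt_of_le hr with heq | hlt
    · -- 3*m+2 = N
      subst heq
      rw [alpha_2, KK2 q _ m (by omega), KKtop q _ (3*m+2+1) (by omega), if_neg (by omega)]
      rw [show 3*m+2 - (3*m+2) = 0 by omega, show 3*m+2 - 3*m - 2 = 0 by omega,
          show 3*m+2 + (3*m+2) = ((6*m+2)+1)+1 by omega,
          show 3*m+2 + 3*m + 2 = 6*m+4 by omega,
          show 3*m+2 - 3*m = 1+1 by omega,
          show 3*m+2 + 3*m = 6*m+2 by omega,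
          qPoch_zero, qPoch_succ q q 1, qPoch_one,
          qPoch_succ (q^2) q ((6*m+2)+1), qPoch_succ (q^2) q (6*m+2),
          show (1:ℂ) - q^(6*m+4) = 1 - q^2*q^(6*m+2) by ring]
      have hB := P2_ne q hq (6*m+2)
      have h1 : (1:ℂ) - q ≠ 0 := by have := hne 1 (by omega); rwa [pow_one] at this
      have h1' := hne1 1
      have h2 := hne2 (6*m+2)
      have h2' := hne2 ((6*m+2)+1)
      rw [mul_zero, sub_zero, sub_zero, ← mul_div_assoc]
      rw [div_eq_div_iff (by apply_rules [mul_ne_zero, one_ne_zero]) (by apply_rules [mul_ne_zero, one_ne_zero])]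
      simp only [nn2]
      ring
    · -- 3*m+2 < N
      obtain ⟨s, rfl⟩ : ∃ s, N = 3*m+3+s := ⟨N - 3*m - 3, by omega⟩
      have hK3 := KK0 q (3*m+3+s) (m+1) (by omega)
      rw [show (3:ℕ)*(m+1) = 3*m+2+1 by ring] at hK3
      rw [alpha_2, KK2 q _ m (by omega), hK3, if_pos (by omega)]
      rw [show 3*m+3+s - (3*m+2) = s+1 by omega,
          show 3*m+3+s - 3*m - 2 = s+1 by omega,
          show 3*m+3+s - (3*m+2+1) = s by omega,
          show 3*m+3+s - 1 - (3*m+2) = s by omega,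
          show 3*m+3+s + (3*m+2) = ((6*m+s+3)+1)+1 by omega,
          show 3*m+3+s + (3*m+2+1) = (((6*m+s+3)+1)+1)+1 by omega,
          show 3*m+3+s - 1 + (3*m+2) = (6*m+s+3)+1 by omega,
          show 3*m+3+s + 3*m + 2 = 6*m+s+5 by omega,
          show 3*m+3+s - 3*m = ((s+1)+1)+1 by omega,
          show 3*m+3+s + 3*m = 6*m+s+3 by omega,
          qPoch_succ q q ((s+1)+1), qPoch_succ q q (s+1), qPoch_succ q q s,
          qPoch_succ (q^2) q (((6*m+s+3)+1)+1), qPoch_succ (q^2) q ((6*m+s+3)+1),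
          qPoch_succ (q^2) q (6*m+s+3),
          show (1:ℂ) - q^(6*m+s+5) = 1 - q^2*q^(6*m+s+3) by ring]
      have hA := P1_ne q hq s
      have hB := P2_ne q hq (6*m+s+3)
      have h1 := hne1 s
      have h1' := hne1 (s+1)
      have h1'' := hne1 ((s+1)+1)
      have h2 := hne2 (6*m+s+3)
      have h2' := hne2 ((6*m+s+3)+1)
      have h2'' := hne2 (((6*m+s+3)+1)+1)
      rw [← mul_div_assoc, ← mul_div_assoc]
      rw [div_sub_div _ _ (by apply_rules [mul_ne_zero, one_ne_zero]) (by apply_rules [mul_ne_zero, one_ne_zero]),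
          div_sub_div _ _ (by apply_rules [mul_ne_zero, one_ne_zero]) (by apply_rules [mul_ne_zero, one_ne_zero]),
          div_eq_div_iff (by apply_rules [mul_ne_zero, one_ne_zero]) (by apply_rules [mul_ne_zero, one_ne_zero])]
      simp only [nn2, nn0]
      ring


lemma KK_zero (q : ℂ) (N : ℕ) : KK q N 0 = 0 := by
  have h := KK0 q N 0 (by omega)
  simp only [Nat.mul_zero, Nat.sub_zero, Nat.add_zero] at h
  rw [h, show nn0 q N 0 = 0 by simp only [nn0]; ring, zero_div]

lemma Tzero (q : ℂ) (hq : ‖q‖ < 1) (N : ℕ) (hN : 1 ≤ N) :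
    (1 - q^(2*N)) * (1 - q^(2*N+1)) *
      (∑ r ∈ Finset.range (N+1), alphaS7 q r / (qPoch q q (N-r) * qPoch (q^2) q (N+r)))
    = q^(2*N) * ∑ r ∈ Finset.range (N+1),
        (if r < N then alphaS7 q r / (qPoch q q (N-1-r) * qPoch (q^2) q (N-1+r)) else 0) := by
  rw [Finset.mul_sum, Finset.mul_sum, ← sub_eq_zero, ← Finset.sum_sub_distrib]
  rw [Finset.sum_congr rfl
      (fun r hr => step q hq N r hN (by have := Finset.mem_range.mp hr; omega))]
  rw [Finset.sum_range_sub' (fun r => KK q N r) (N+1)]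
  rw [KK_zero q N, KKtop q N (N+1) (by omega), sub_zero]

lemma mainS7 (q : ℂ) (hq : ‖q‖ < 1) (n : ℕ) :
    ∑ r ∈ Finset.range (n + 1), alphaS7 q r / (qPoch q q (n - r) * qPoch (q ^ 2) q (n + r))
      = q ^ (n ^ 2 + n) / qPoch (q ^ 2) q (2 * n) := by
  induction n with
  | zero =>
      rw [Finset.sum_range_one]
      have h0 : alphaS7 q 0 = 1 := by
        have := alpha_0 q 0
        simpa using this
      simp [h0, qPoch_zero]
  | succ n ih =>
      have hT := Tzero q hq (n+1) (by omega)
      have hsum : ∑ r ∈ Finset.range (n+1+1),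
          (if r < n+1 then alphaS7 q r / (qPoch q q (n+1-1-r) * qPoch (q^2) q (n+1-1+r)) else 0)
          = ∑ r ∈ Finset.range (n+1), alphaS7 q r / (qPoch q q (n-r) * qPoch (q^2) q (n+r)) := by
        rw [Finset.sum_range_succ, if_neg (lt_irrefl (n+1)), add_zero]
        refine Finset.sum_congr rfl (fun r hr => ?_)
        rw [if_pos (Finset.mem_range.mp hr)]
        congr 2
      rw [hsum, ih] at hT
      have hA : ((1:ℂ) - q^(2*(n+1))) * (1 - q^(2*(n+1)+1)) ≠ 0 :=
        mul_ne_zero (one_sub_pow_ne q hq (by omega)) (one_sub_pow_ne q hq (by omega))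
      apply mul_left_cancel₀ hA
      rw [hT]
      have hP : qPoch (q^2) q (2*(n+1)) =
          qPoch (q^2) q (2*n) * (1 - q^2*q^(2*n)) * (1 - q^2*q^(2*n+1)) := by
        rw [show 2*(n+1) = (2*n+1)+1 by omega, qPoch_succ, qPoch_succ]
      have hB := P2_ne q hq (2*n)
      have h2 := one_sub_pow_ne q hq (j := 2*(n+1)) (by omega)
      have h3 := one_sub_pow_ne q hq (j := 2*(n+1)+1) (by omega)
      have h2' : ((1:ℂ) - q^2*q^(2*n)) ≠ 0 := by
        have := h2; rwa [show 2*(n+1) = 2*n+2 by omega, pow_add, mul_comm (q^(2*n)) (q^2)] at this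
      have h3' : ((1:ℂ) - q^2*q^(2*n+1)) ≠ 0 := by
        have := h3; rwa [show 2*(n+1)+1 = (2*n+1)+2 by omega, pow_add, mul_comm (q^(2*n+1)) (q^2)] at this
      rw [hP, ← mul_div_assoc, ← mul_div_assoc,
          div_eq_div_iff (by apply_rules [mul_ne_zero, one_ne_zero])
            (by apply_rules [mul_ne_zero, one_ne_zero])]
      ring

theorem stmt7 (q : ℂ) (hq : ‖q‖ < 1) (n : ℕ) :
    q ^ (n ^ 2 + n) / qPoch (q ^ 2) q (2 * n)
      = ∑ r ∈ Finset.range (n + 1), alphaS7 q r / (qPoch q q (n - r) * qPoch (q ^ 2) q (n + r)) := by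
  exact (mainS7 q hq n).symm
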